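/- For every graph G and positive integer r, wcol_r(G) ≤ col_r(G)^r. -/

import Mathlib

variable {V : Type*}

/-- Strong r-reachability. -/
def SReach (G : SimpleGraph V) (π : LinearOrder V) (r : ℕ) (v : V) : Set V :=
  letI := π
  {u | u ≤ v ∧ ∃ p : G.Walk v u, p.IsPath ∧ p.length ≤ r ∧
      ∀ w ∈ p.support, w ≠ v → w ≠ u → v < w}

/-- Weak r-reachability. -/
def WReach (G : SimpleGraph V) (π : LinearOrder V) (r : ℕ) (v : V) : Set V :=
  letI := π
  {u | u ≤ v ∧ ∃ p : G.Walk v u, p.IsPath ∧ p.length ≤ r ∧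
      ∀ w ∈ p.support, w ≠ v → w ≠ u → u < w}

noncomputable def scol [Fintype V] (G : SimpleGraph V) (r : ℕ) : ℕ :=
  sInf {k | ∃ π : LinearOrder V, ∀ v, (SReach G π r v).ncard ≤ k}

noncomputable def wcol [Fintype V] (G : SimpleGraph V) (r : ℕ) : ℕ :=
  sInf {k | ∃ π : LinearOrder V, ∀ v, (WReach G π r v).ncard ≤ k}

open SimpleGraph in
lemma self_mem_SReach (G : SimpleGraph V) (π : LinearOrder V) (r : ℕ) (v : V) :
    v ∈ SReach G π r v := by
  letI := π
  refine ⟨le_refl v, Walk.nil, Walk.IsPath.nil, by simp, ?_⟩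
  intro w hw h1 _
  simp only [Walk.support_nil, List.mem_singleton] at hw
  exact absurd hw h1

/-- Iterated strong reachability: vertices reachable by a chain of at most `n`
strong-`r`-reachability steps. -/
def iterReach (G : SimpleGraph V) (π : LinearOrder V) (r : ℕ) : ℕ → V → Set V
  | 0, v => {v}
  | (n + 1), v => ⋃ x ∈ iterReach G π r n v, SReach G π r x

lemma self_mem_iterReach (G : SimpleGraph V) (π : LinearOrder V) (r n : ℕ) (v : V) :
    v ∈ iterReach G π r n v := by
  induction n with
  | zero => exact rfl
  | succ n ih => exact Set.mem_biUnion ih (self_mem_SReach G π r v)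

lemma iterReach_mono (G : SimpleGraph V) (π : LinearOrder V) (r : ℕ) {m n : ℕ} (h : m ≤ n)
    (v : V) : iterReach G π r m v ⊆ iterReach G π r n v := by
  induction n with
  | zero => simpa [Nat.le_zero.mp h] using Set.Subset.refl _
  | succ n ih =>
    rcases Nat.le_succ_iff.mp h with h' | h'
    · exact fun u hu => Set.mem_biUnion (ih h' hu) (self_mem_SReach G π r u)
    · simpa [h'] using Set.Subset.refl _

lemma iterReach_trans (G : SimpleGraph V) (π : LinearOrder V) (r : ℕ) {a b : ℕ} {v x u : V}
    (hx : x ∈ iterReach G π r a v) (hu : u ∈ iterReach G π r b x) :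
    u ∈ iterReach G π r (a + b) v := by
  induction b generalizing u with
  | zero => cases hu; exact hx
  | succ b ih =>
    obtain ⟨y, hy, hu⟩ := Set.mem_iUnion₂.mp hu
    exact Set.mem_biUnion (ih hy) hu

lemma ncard_biUnion_le_aux {s : Set V} (hs : s.Finite) (f : V → Set V)
    (hfin : ∀ x, (f x).Finite) (c : ℕ) (hc : ∀ x, (f x).ncard ≤ c) :
    (⋃ x ∈ s, f x).ncard ≤ s.ncard * c := by
  refine Set.Finite.induction_on (motive := fun s _ => (⋃ x ∈ s, f x).ncard ≤ s.ncard * c) s hs (by simp) @fun a t ha ht ih => ?_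
  · have h1 : (⋃ x ∈ insert a t, f x) = f a ∪ ⋃ x ∈ t, f x := by
      simp [Set.biUnion_insert]
    have hfin2 : (⋃ x ∈ t, f x).Finite := Set.Finite.biUnion ht fun x _ => hfin x
    calc (⋃ x ∈ insert a t, f x).ncard ≤ (f a).ncard + (⋃ x ∈ t, f x).ncard := by
          rw [h1]; exact Set.ncard_union_le _ _
      _ ≤ c + t.ncard * c := Nat.add_le_add (hc a) ih
      _ = (insert a t).ncard * c := by
          rw [Set.ncard_insert_of_notMem ha ht]; ring

lemma ncard_iterReach_le [Fintype V] (G : SimpleGraph V) (π : LinearOrder V) (r : ℕ) {c : ℕ}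
    (hc : ∀ x, (SReach G π r x).ncard ≤ c) (n : ℕ) (v : V) :
    (iterReach G π r n v).ncard ≤ c ^ n := by
  induction n generalizing v with
  | zero => simp [iterReach]
  | succ n ih =>
    calc (iterReach G π r (n + 1) v).ncard
        ≤ (iterReach G π r n v).ncard * c :=
          ncard_biUnion_le_aux (Set.toFinite _) _ (fun x => Set.toFinite _) c hc
      _ ≤ c ^ n * c := Nat.mul_le_mul_right c (ih v)
      _ = c ^ (n + 1) := (pow_succ c n).symm

open SimpleGraph in
lemma wreach_mem_iterReach (G : SimpleGraph V) (π : LinearOrder V) (r : ℕ) :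
    ∀ n, n ≤ r → ∀ v u : V, (letI := π; u ≤ v) →
    ∀ p : G.Walk v u, p.IsPath → p.length ≤ n →
    (letI := π; ∀ w ∈ p.support, w ≠ v → w ≠ u → u < w) →
    u ∈ iterReach G π r n v := by
  letI := π
  classical
  intro n
  induction n using Nat.strong_induction_on with
  | _ n IH =>
  intro hn v u hle p hp hplen hint
  by_cases huv : u = v
  · subst huv; exact self_mem_iterReach G π r n u
  by_cases hall : ∀ w ∈ p.support, w ≠ v → w ≠ u → v < w
  · -- u is strongly reachable from v
    have hS : u ∈ SReach G π r v := ⟨hle, p, hp, le_trans hplen hn, hall⟩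
    have hn1 : 1 ≤ n := by
      rcases Nat.eq_zero_or_pos n with h0 | h1
      · exfalso
        have : p.length = 0 := by omega
        exact huv (Walk.eq_of_length_eq_zero this).symm
      · exact h1
    have : u ∈ iterReach G π r 1 v :=
      Set.mem_biUnion (self_mem_iterReach G π r 0 v) hS
    exact iterReach_mono G π r hn1 v this
  · push_neg at hall
    obtain ⟨w₀, hw₀s, hw₀v, hw₀u, hw₀le⟩ := hall
    -- the minimum vertex of the path other than u
    set s : Finset V := p.support.toFinset.erase u with hs_def
    have hvs : v ∈ s := by
      simp [hs_def, Ne.symm huv, p.start_mem_support]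
    have hsne : s.Nonempty := ⟨v, hvs⟩
    set x : V := s.min' hsne with hx_def
    have hxs : x ∈ s := Finset.min'_mem s hsne
    have hxu : x ≠ u := (Finset.mem_erase.mp hxs).1
    have hxsup : x ∈ p.support := by
      have := (Finset.mem_erase.mp hxs).2
      simpa using this
    have hmin : ∀ w ∈ s, x ≤ w := fun w hw => Finset.min'_le s w hw
    have hw₀mem : w₀ ∈ s := by simp [hs_def, hw₀u, hw₀s]
    have hxltv : x < v := lt_of_le_of_lt (hmin w₀ hw₀mem) (lt_of_le_of_ne hw₀le hw₀v)
    have hxv : x ≠ v := ne_of_lt hxltv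
    have hux : u < x := hint x hxsup hxv hxu
    -- split the path at x
    set q1 : G.Walk v x := p.takeUntil x hxsup with hq1_def
    set q2 : G.Walk x u := p.dropUntil x hxsup with hq2_def
    have hq1p : q1.IsPath := hp.takeUntil hxsup
    have hq2p : q2.IsPath := hp.dropUntil hxsup
    have hlen : q1.length + q2.length = p.length := by
      have := congrArg Walk.length (p.take_spec hxsup)
      rwa [Walk.length_append] at this
    have ha1 : 1 ≤ q1.length := by
      rcases Nat.eq_zero_or_pos q1.length with h0 | h1
      · exact absurd (Walk.eq_of_length_eq_zero h0).symm hxv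
      · exact h1
    have hb1 : 1 ≤ q2.length := by
      rcases Nat.eq_zero_or_pos q2.length with h0 | h1
      · exact absurd (Walk.eq_of_length_eq_zero h0) hxu
      · exact h1
    -- disjointness facts from nodup of p's support
    have hnd : (q1.support ++ q2.support.tail).Nodup := by
      rw [← Walk.support_append, p.take_spec hxsup]
      exact hp.support_nodup
    have hdisj : List.Disjoint q1.support q2.support.tail :=
      List.disjoint_of_nodup_append hnd
    have huq2tail : u ∈ q2.support.tail := by
      have h1 : u ∈ q2.support := q2.end_mem_support
      rw [q2.support_eq_cons] at h1
      rcases List.mem_cons.mp h1 with h | h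
      · exact absurd h.symm hxu
      · exact h
    have hunotq1 : u ∉ q1.support := fun h => hdisj h huq2tail
    have hvnotq2tail : v ∉ q2.support.tail := fun h => hdisj q1.start_mem_support h
    -- x ∈ iterReach a v
    have hxmem : x ∈ iterReach G π r q1.length v := by
      refine IH q1.length (by omega) (by omega) v x (le_of_lt hxltv) q1 hq1p (le_refl _) ?_
      intro w hw hwv hwx
      have hwp : w ∈ p.support := p.support_takeUntil_subset hxsup hw
      have hwu : w ≠ u := fun h => hunotq1 (h ▸ hw)
      have hws : w ∈ s := by simp [hs_def, hwu, hwp]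
      exact lt_of_le_of_ne (hmin w hws) (Ne.symm hwx)
    -- u ∈ iterReach b x
    have humem : u ∈ iterReach G π r q2.length x := by
      refine IH q2.length (by omega) (by omega) x u (le_of_lt hux) q2 hq2p (le_refl _) ?_
      intro w hw hwx hwu
      have hwp : w ∈ p.support := p.support_dropUntil_subset hxsup hw
      have hwv : w ≠ v := by
        intro h
        subst h
        rw [q2.support_eq_cons] at hw
        rcases List.mem_cons.mp hw with h | h
        · exact hwx h
        · exact hvnotq2tail h
      exact hint w hwp hwv hwu
    have := iterReach_trans G π r hxmem humem
    exact iterReach_mono G π r (by omega) v this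

theorem stmt5 [Fintype V] (G : SimpleGraph V) (r : ℕ) (hr : 0 < r) :
    wcol G r ≤ (scol G r) ^ r := by
  classical
  letI π₀ : LinearOrder V := LinearOrder.lift' (Fintype.equivFin V) (Fintype.equivFin V).injective
  have hne : {k | ∃ π : LinearOrder V, ∀ v, (SReach G π r v).ncard ≤ k}.Nonempty := by
    refine ⟨Fintype.card V, π₀, fun v => ?_⟩
    calc (SReach G π₀ r v).ncard ≤ (Set.univ : Set V).ncard :=
          Set.ncard_le_ncard (Set.subset_univ _) Set.finite_univ
      _ = Fintype.card V := by simp [Set.ncard_univ, Nat.card_eq_fintype_card]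
  have hmem : scol G r ∈ {k | ∃ π : LinearOrder V, ∀ v, (SReach G π r v).ncard ≤ k} :=
    Nat.sInf_mem hne
  obtain ⟨π, hπ⟩ := hmem
  apply Nat.sInf_le
  refine ⟨π, fun v => ?_⟩
  have hsub : WReach G π r v ⊆ iterReach G π r r v := by
    intro u hu
    obtain ⟨hle, p, hp, hplen, hint⟩ := hu
    exact wreach_mem_iterReach G π r r (le_refl r) v u hle p hp hplen hint
  calc (WReach G π r v).ncard ≤ (iterReach G π r r v).ncard :=
        Set.ncard_le_ncard hsub (Set.toFinite _)
    _ ≤ (scol G r) ^ r := ncard_iterReach_le G π r hπ r v
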